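/- arXiv:1508.04084 — 2 statements merged into one kernel-verified Lean document; each statement's English description precedes it below -/
import Mathlib

section
/- For every positive integer m and nonnegative integer n, ∫_0^1 x^n E_{m-1}(x) dx = ((-1)^m / m) ( ∑_{j=0}^n C(n,j) E_{m+j}(0) / C(m+j, j) + E_{m+n}(0) / C(m+n, n) ). -/
/-- The `n`-th Euler polynomial `E_n(x)`, characterized by the generating function
`2 e^{xz}/(e^z+1) = ∑ E_n(x) z^n/n!`; given by the standard closed form
`E_n(x) = (2^{n+1}/(n+1)) (B_{n+1}((x+1)/2) - B_{n+1}(x/2))` in terms of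
Bernoulli polynomials. -/
noncomputable def eulerPoly (n : ℕ) (x : ℝ) : ℝ :=
  2 ^ (n + 1) / (n + 1) *
    (((Polynomial.bernoulli (n + 1)).map (algebraMap ℚ ℝ)).eval ((x + 1) / 2) -
     ((Polynomial.bernoulli (n + 1)).map (algebraMap ℚ ℝ)).eval (x / 2))

open Polynomial in
lemma bernoulli_comp_one_sub (n : ℕ) :
    (Polynomial.bernoulli n).comp (1 - X) = (-1 : ℚ[X]) ^ n * Polynomial.bernoulli n := by
  induction n with
  | zero => simp [Polynomial.bernoulli_zero]
  | succ n ih =>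
    have hd : derivative ((Polynomial.bernoulli (n+1)).comp (1 - X) -
        (-1 : ℚ[X]) ^ (n+1) * Polynomial.bernoulli (n+1)) = 0 := by
      rw [derivative_sub, derivative_comp, Polynomial.derivative_bernoulli_add_one,
        derivative_mul, derivative_bernoulli_add_one]
      simp only [derivative_sub, derivative_one, derivative_X, zero_sub, mul_comp,
        natCast_comp, add_comp, one_comp, derivative_pow, derivative_neg, derivative_one]
      rw [ih]
      push_cast
      ring
    have := Polynomial.eq_C_of_derivative_eq_zero hd
    have h0 : ((Polynomial.bernoulli (n+1)).comp (1 - X) -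
        (-1 : ℚ[X]) ^ (n+1) * Polynomial.bernoulli (n+1)).eval 0 = 0 := by
      simp only [eval_sub, eval_comp, eval_sub, eval_one, eval_X, sub_zero,
        Polynomial.bernoulli_eval_one, eval_mul, eval_pow, eval_neg, eval_one,
        Polynomial.bernoulli_eval_zero]
      rw [bernoulli'_eq_bernoulli]
      ring
    have hc : ((Polynomial.bernoulli (n+1)).comp (1 - X) -
        (-1 : ℚ[X]) ^ (n+1) * Polynomial.bernoulli (n+1)).coeff 0 = 0 := by
      rwa [← Polynomial.coeff_zero_eq_eval_zero] at h0
    rw [hc, map_zero, sub_eq_zero] at this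
    exact this

open Polynomial in
lemma bern_map_reflect (k : ℕ) (y : ℝ) :
    ((Polynomial.bernoulli k).map (algebraMap ℚ ℝ)).eval (1 - y)
      = (-1 : ℝ) ^ k * ((Polynomial.bernoulli k).map (algebraMap ℚ ℝ)).eval y := by
  have h := congrArg (fun p => (p.map (algebraMap ℚ ℝ)).eval y) (bernoulli_comp_one_sub k)
  simpa [Polynomial.map_comp, Polynomial.eval_comp] using h


lemma eulerPoly_reflect (k : ℕ) : eulerPoly k 1 = (-1 : ℝ) ^ k * eulerPoly k 0 := by
  unfold eulerPoly
  have h1 := bern_map_reflect (k+1) 0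
  have h2 := bern_map_reflect (k+1) (1/2)
  norm_num at h1 h2 ⊢
  linear_combination (2^(k+1)/((k:ℝ)+1)) * h1 - (2^(k+1)/((k:ℝ)+1)) * h2

lemma eulerPoly_one_add_zero (k : ℕ) : eulerPoly (k+1) 1 + eulerPoly (k+1) 0 = 0 := by
  unfold eulerPoly
  have hB : (Polynomial.aeval (1:ℝ)) (Polynomial.bernoulli (k+2))
      = (Polynomial.aeval (0:ℝ)) (Polynomial.bernoulli (k+2)) := by
    rw [Polynomial.aeval_def, Polynomial.aeval_def, ← Polynomial.eval_map, ← Polynomial.eval_map,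
      Polynomial.eval_one_map, Polynomial.eval_zero_map,
      Polynomial.bernoulli_eval_one, Polynomial.bernoulli_eval_zero,
      bernoulli_eq_bernoulli'_of_ne_one (by omega)]
  norm_num
  linear_combination (2^(k+2)/((k:ℝ)+2)) * hB

lemma eulerPoly_zero_neg (k : ℕ) :
    (-1:ℝ)^(k+1) * eulerPoly (k+1) 0 = - eulerPoly (k+1) 0 := by
  have h1 := eulerPoly_reflect (k+1)
  have h2 := eulerPoly_one_add_zero k
  linarith [h1, h2]

lemma continuous_eulerPoly (n : ℕ) : Continuous (eulerPoly n) := by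
  unfold eulerPoly
  fun_prop

open Polynomial in
lemma hasDerivAt_eulerPoly (n : ℕ) (x : ℝ) :
    HasDerivAt (eulerPoly (n+1)) (((n:ℝ)+1) * eulerPoly n x) x := by
  have e : eulerPoly (n+1) = fun y : ℝ =>
      (2:ℝ)^(n+1+1)/((n:ℝ)+1+1) *
        (((Polynomial.bernoulli (n+1+1)).map (algebraMap ℚ ℝ)).eval ((y+1)/2) -
         ((Polynomial.bernoulli (n+1+1)).map (algebraMap ℚ ℝ)).eval (y/2)) := by
    funext y
    unfold eulerPoly
    push_cast
    ring
  have hderiv : derivative ((Polynomial.bernoulli (n+1+1)).map (algebraMap ℚ ℝ))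
      = (((n:ℝ[X])+1+1)) * (Polynomial.bernoulli (n+1)).map (algebraMap ℚ ℝ) := by
    rw [Polynomial.derivative_map, Polynomial.derivative_bernoulli_add_one]
    push_cast
    simp [Polynomial.map_mul]
  set P : ℝ[X] := (Polynomial.bernoulli (n+1+1)).map (algebraMap ℚ ℝ) with hP
  have ha : HasDerivAt (fun y : ℝ => (y + 1) / 2) (1/2) x := by
    simpa using (((hasDerivAt_id x).add_const 1).div_const 2)
  have hb : HasDerivAt (fun y : ℝ => y / 2) (1/2) x := by
    simpa using ((hasDerivAt_id x).div_const 2)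
  have h1 : HasDerivAt (fun y : ℝ => P.eval ((y + 1) / 2))
      (P.derivative.eval ((x+1)/2) * (1/2)) x := (P.hasDerivAt _).comp x ha
  have h2 : HasDerivAt (fun y : ℝ => P.eval (y / 2))
      (P.derivative.eval (x/2) * (1/2)) x := (P.hasDerivAt _).comp x hb
  have h3 := ((h1.sub h2).const_mul ((2:ℝ) ^ (n + 1 + 1) / ((n:ℝ) + 1 + 1)))
  rw [e]
  refine h3.congr_deriv ?_
  rw [hderiv]
  simp only [Polynomial.eval_mul, Polynomial.eval_add, Polynomial.eval_natCast,
    Polynomial.eval_one]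
  have hn2 : ((n:ℝ)+2) ≠ 0 := by positivity
  have hn1 : ((n:ℝ)+1) ≠ 0 := by positivity
  unfold eulerPoly
  push_cast
  field_simp
  ring

lemma intInt (k n : ℕ) :
    IntervalIntegrable (fun x : ℝ => x ^ k * eulerPoly n x) MeasureTheory.volume 0 1 :=
  ((continuous_pow k).mul (continuous_eulerPoly n)).intervalIntegrable 0 1

lemma integral_base (m : ℕ) :
    ∫ x in (0:ℝ)..1, eulerPoly m x
      = (eulerPoly (m+1) 1 - eulerPoly (m+1) 0) / ((m:ℝ)+1) := by
  have hm1 : ((m:ℝ)+1) ≠ 0 := by positivity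
  have H : ∀ x ∈ Set.uIcc (0:ℝ) 1,
      HasDerivAt (fun y => eulerPoly (m+1) y / ((m:ℝ)+1)) (eulerPoly m x) x := by
    intro x _
    have h := (hasDerivAt_eulerPoly m x).div_const ((m:ℝ)+1)
    refine h.congr_deriv ?_
    field_simp
  rw [intervalIntegral.integral_eq_sub_of_hasDerivAt H
    ((continuous_eulerPoly m).intervalIntegrable 0 1)]
  ring

lemma integral_step (m n : ℕ) :
    ∫ x in (0:ℝ)..1, x ^ (n+1) * eulerPoly m x
      = eulerPoly (m+1) 1 / ((m:ℝ)+1)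
        - (((n:ℝ)+1)/((m:ℝ)+1)) * ∫ x in (0:ℝ)..1, x ^ n * eulerPoly (m+1) x := by
  have hm1 : ((m:ℝ)+1) ≠ 0 := by positivity
  have H : ∀ x ∈ Set.uIcc (0:ℝ) 1,
      HasDerivAt (fun y => y ^ (n+1) * eulerPoly (m+1) y / ((m:ℝ)+1))
        ((((n:ℝ)+1)/((m:ℝ)+1)) * (x ^ n * eulerPoly (m+1) x)
          + x ^ (n+1) * eulerPoly m x) x := by
    intro x _
    have h := ((hasDerivAt_pow (n+1) x).mul (hasDerivAt_eulerPoly m x)).div_const ((m:ℝ)+1)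
    refine h.congr_deriv ?_
    simp only [Nat.add_sub_cancel]
    push_cast
    field_simp
  have h2 := intervalIntegral.integral_eq_sub_of_hasDerivAt H
    (((intInt n (m+1)).const_mul _).add (intInt (n+1) m))
  rw [intervalIntegral.integral_add ((intInt n (m+1)).const_mul _) (intInt (n+1) m),
    intervalIntegral.integral_const_mul] at h2
  simp only [one_pow, one_mul, zero_pow (Nat.succ_ne_zero n), zero_mul, zero_div, sub_zero] at h2
  linarith [h2]

lemma choose_cast_ne (N k : ℕ) (h : k ≤ N) : ((N.choose k : ℝ)) ≠ 0 := by
  exact_mod_cast (Nat.choose_pos h).ne'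

lemma term_id (m n j : ℕ) (e : ℝ) :
    ((n+1).choose (j+1) : ℝ) * e / (((m+2+j).choose (j+1) : ℝ))
      = (((n:ℝ)+1)/((m:ℝ)+2)) * (((n.choose j : ℝ)) * e / (((m+2+j).choose j : ℝ))) := by
  have hA : ((n+1).choose (j+1) : ℝ) * ((j:ℝ)+1) = ((n:ℝ)+1) * (n.choose j : ℝ) := by
    have := (Nat.add_one_mul_choose_eq n j).symm
    exact_mod_cast congrArg (Nat.cast : ℕ → ℝ) this
  have hB : ((m+2+j).choose (j+1) : ℝ) * ((j:ℝ)+1) = ((m+2+j).choose j : ℝ) * ((m:ℝ)+2) := by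
    have h := Nat.choose_succ_right_eq (m+2+j) j
    rw [Nat.add_sub_cancel] at h
    exact_mod_cast congrArg (Nat.cast : ℕ → ℝ) h
  have hj1 : ((j:ℝ)+1) ≠ 0 := by positivity
  have hb : (((m+2+j).choose (j+1) : ℝ)) ≠ 0 := choose_cast_ne _ _ (by omega)
  have hd : (((m+2+j).choose j : ℝ)) ≠ 0 := choose_cast_ne _ _ (by omega)
  have hm2 : ((m:ℝ)+2) ≠ 0 := by positivity
  have key : ((n+1).choose (j+1) : ℝ) * ((m+2+j).choose j : ℝ) * ((m:ℝ)+2)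
      = (((n:ℝ)+1)) * (n.choose j : ℝ) * ((m+2+j).choose (j+1) : ℝ) := by
    apply mul_right_cancel₀ hj1
    linear_combination (((m+2+j).choose j : ℝ) * ((m:ℝ)+2)) * hA
      - (((n:ℝ)+1) * (n.choose j : ℝ)) * hB
  rw [div_mul_div_comm, div_eq_div_iff hb (mul_ne_zero hm2 hd)]
  linear_combination e * key

lemma key_formula (n : ℕ) : ∀ m : ℕ,
    ∫ x in (0:ℝ)..1, x ^ n * eulerPoly m x =
      ((-1:ℝ)^(m+1)/((m:ℝ)+1)) *
        ((∑ j ∈ Finset.range (n+1),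
            (n.choose j : ℝ) * eulerPoly (m+1+j) 0 / (((m+1+j).choose j : ℝ)))
          + eulerPoly (m+1+n) 0 / (((m+1+n).choose n : ℝ))) := by
  induction n with
  | zero =>
    intro m
    have hm1 : ((m:ℝ)+1) ≠ 0 := by positivity
    have h1 : eulerPoly (m+1) 1 = - eulerPoly (m+1) 0 := by
      linarith [eulerPoly_one_add_zero m]
    have h5 := eulerPoly_zero_neg m
    simp only [zero_add, pow_zero, one_mul, Finset.sum_range_one, Nat.choose_self, Nat.choose_zero_right,
      Nat.cast_one, add_zero]
    rw [integral_base m, h1]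
    field_simp
    linear_combination (-2:ℝ) * h5
  | succ n ih =>
    intro m
    have hm1 : ((m:ℝ)+1) ≠ 0 := by positivity
    have hm2 : ((m:ℝ)+2) ≠ 0 := by positivity
    have h1 : eulerPoly (m+1) 1 = - eulerPoly (m+1) 0 := by
      linarith [eulerPoly_one_add_zero m]
    have h5 := eulerPoly_zero_neg m
    rw [integral_step m n, ih (m+1), h1]
    conv_rhs => rw [Finset.sum_range_succ']
    have hsumL : (∑ j ∈ Finset.range (n+1),
          (n.choose j : ℝ) * eulerPoly (m+1+1+j) 0 / (((m+1+1+j).choose j : ℝ)))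
        = ∑ j ∈ Finset.range (n+1),
          (n.choose j : ℝ) * eulerPoly (m+2+j) 0 / (((m+2+j).choose j : ℝ)) :=
      Finset.sum_congr rfl fun j _ => by rw [show m+1+1+j = m+2+j from by omega]
    have hsumR : (∑ j ∈ Finset.range (n+1),
          ((n+1).choose (j+1) : ℝ) * eulerPoly (m+1+(j+1)) 0 / (((m+1+(j+1)).choose (j+1) : ℝ)))
        = (((n:ℝ)+1)/((m:ℝ)+2)) * ∑ j ∈ Finset.range (n+1),
          (n.choose j : ℝ) * eulerPoly (m+2+j) 0 / (((m+2+j).choose j : ℝ)) := by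
      rw [Finset.mul_sum]
      exact Finset.sum_congr rfl fun j _ => by
        rw [show m+1+(j+1) = m+2+j from by omega, term_id]
    have htail : eulerPoly (m+1+(n+1)) 0 / (((m+1+(n+1)).choose (n+1) : ℝ))
        = (((n:ℝ)+1)/((m:ℝ)+2)) * (eulerPoly (m+1+1+n) 0 / (((m+1+1+n).choose n : ℝ))) := by
      have := term_id m n n (eulerPoly (m+2+n) 0)
      simp only [Nat.choose_self, Nat.cast_one, one_mul] at this
      rw [show m+1+(n+1) = m+2+n from by omega, show m+1+1+n = m+2+n from by omega]
      exact this
    rw [hsumL, hsumR, htail, show m+1+1+n = m+2+n from by omega]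
    simp only [Nat.choose_zero_right, Nat.cast_one, add_zero, one_mul]
    have hc1 : (((m+2+n).choose n : ℝ)) ≠ 0 := choose_cast_ne _ _ (by omega)
    push_cast
    field_simp
    linear_combination (-(((m+2+n).choose n : ℝ)) * ((m:ℝ)+2)^2) * h5

theorem integral_pow_mul_eulerPoly (m : ℕ) (hm : 0 < m) (n : ℕ) :
    ∫ x in (0:ℝ)..1, x ^ n * eulerPoly (m - 1) x =
      ((-1 : ℝ) ^ m / m) *
        ((∑ j ∈ Finset.range (n + 1),
            (n.choose j : ℝ) * eulerPoly (m + j) 0 / ((m + j).choose j : ℝ)) +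
          eulerPoly (m + n) 0 / ((m + n).choose n : ℝ)) := by
  obtain ⟨k, rfl⟩ : ∃ k, m = k + 1 := ⟨m - 1, by omega⟩
  simp only [Nat.add_sub_cancel]
  rw [key_formula n k]
  push_cast
  ring
end

section
/- For every nonnegative integer m, ∫_0^1 E_{2m}(x) dx = (8(2m)! (-1)^m / π^{2m+2}) λ(2m+2), where λ(s) = ∑_{n=0}^∞ 1/(2n+1)^s. -/
open Real Set
open scoped Nat

lemma eulerPoly_eq (n : ℕ) (x : ℝ) :
    eulerPoly n x = 2 ^ (n + 1) / (n + 1) *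
      (bernoulliFun (n+1) ((x + 1) / 2) - bernoulliFun (n+1) (x / 2)) := rfl

/-- Antiderivative computation for the integral of an Euler polynomial. -/
lemma integral_eulerPoly (n : ℕ) :
    ∫ x in (0:ℝ)..1, eulerPoly n x =
      (2:ℝ)^(n+2) / ((n+1)*(n+2)) *
        (bernoulliFun (n+2) 1 + bernoulliFun (n+2) 0 - 2 * bernoulliFun (n+2) (1/2)) := by
  have hd : ∀ x ∈ Set.uIcc (0:ℝ) 1,
      HasDerivAt (fun x : ℝ => (2:ℝ)^(n+2) / ((n+1)*(n+2)) *
          (bernoulliFun (n+2) ((x+1)/2) - bernoulliFun (n+2) (x/2)))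
        (eulerPoly n x) x := by
    intro x _
    have h1 : HasDerivAt (fun x : ℝ => (x+1)/2) (1/2) x := by
      simpa using ((hasDerivAt_id x).add_const 1).div_const 2
    have h2 : HasDerivAt (fun x : ℝ => x/2) (1/2) x := by
      simpa using (hasDerivAt_id x).div_const 2
    have hb1 := (hasDerivAt_bernoulliFun (n+2) ((x+1)/2)).comp x h1
    have hb2 := (hasDerivAt_bernoulliFun (n+2) (x/2)).comp x h2
    have := ((hb1.sub hb2).const_mul ((2:ℝ)^(n+2) / ((n+1)*(n+2))))
    refine this.congr_deriv ?_
    have hn1 : ((n:ℝ) + 1) ≠ 0 := by positivity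
    have hn2 : ((n:ℝ) + 2) ≠ 0 := by positivity
    rw [eulerPoly_eq]
    rw [show n + 2 - 1 = n + 1 from rfl]
    push_cast
    field_simp
    ring
  have hint : IntervalIntegrable (fun x => eulerPoly n x) MeasureTheory.volume 0 1 := by
    apply Continuous.intervalIntegrable
    have h := ((Polynomial.bernoulli (n+1)).map (algebraMap ℚ ℝ)).continuous
    have : Continuous (eulerPoly n) := by
      simp only [funext (eulerPoly_eq n)]
      exact continuous_const.mul ((h.comp (by fun_prop)).sub (h.comp (by fun_prop)))
    exact this
  rw [intervalIntegral.integral_eq_sub_of_hasDerivAt hd hint]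
  norm_num
  ring

lemma hasSum_odd (m : ℕ) :
    HasSum (fun n : ℕ => (1 : ℝ) / (2 * n + 1) ^ (2 * m + 2))
      (((-1 : ℝ) ^ (m + 1 + 1) * (2 : ℝ) ^ (2 * (m+1) - 1) * π ^ (2 * (m+1)) *
          bernoulli (2 * (m+1)) / (2 * (m+1))! -
        (-1 : ℝ) ^ (m + 1 + 1) * (2 * π) ^ (2 * (m+1)) / 2 / (2 * (m+1))! *
          bernoulliFun (2 * (m+1)) (1/2)) / 2) := by
  have h1 := hasSum_zeta_nat (k := m + 1) (Nat.succ_ne_zero m)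
  have h2 := hasSum_one_div_nat_pow_mul_cos (k := m + 1) (Nat.succ_ne_zero m)
      (x := (1:ℝ)/2) (by constructor <;> norm_num)
  have h2' : HasSum (fun n : ℕ => 1 / (n : ℝ) ^ (2 * (m+1)) * (-1 : ℝ) ^ n)
      ((-1 : ℝ) ^ (m + 1 + 1) * (2 * π) ^ (2 * (m+1)) / 2 / (2 * (m+1))! *
        bernoulliFun (2 * (m+1)) (1/2)) := by
    convert h2 using 2 with n
    rw [show 2 * π * n * (1/2 : ℝ) = n * π - 0 by ring, Real.cos_nat_mul_pi_sub, Real.cos_zero,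
      mul_one]
    rfl
  have h3 := (h1.sub h2').div_const 2
  set f : ℕ → ℝ := fun n => (1 / (n : ℝ) ^ (2 * (m+1)) -
      1 / (n : ℝ) ^ (2 * (m+1)) * (-1 : ℝ) ^ n) / 2 with hf
  have hinj : Function.Injective (fun n : ℕ => 2 * n + 1) := fun a b h => by
    simp only at h; omega
  have hzero : ∀ x ∉ Set.range (fun n : ℕ => 2 * n + 1), f x = 0 := by
    intro x hx
    have hev : Even x := by
      rcases Nat.even_or_odd x with h | h
      · exact h
      · exact absurd ⟨h.choose, by have := h.choose_spec; simp only; omega⟩ hx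
    simp [hf, hev.neg_one_pow]
  have h4 := (Function.Injective.hasSum_iff hinj hzero).mpr h3
  have hfn : (f ∘ fun n : ℕ => 2 * n + 1) =
      fun n : ℕ => (1 : ℝ) / (2 * n + 1) ^ (2 * m + 2) := by
    funext n
    have hn : ((2 * n + 1 : ℕ) : ℝ) = 2 * (n : ℝ) + 1 := by push_cast; ring
    have hodd : ((-1 : ℝ)) ^ (2 * n + 1) = -1 := Odd.neg_one_pow ⟨n, by ring⟩
    simp only [hf, Function.comp_apply, hn, hodd]
    rw [show 2 * (m + 1) = 2 * m + 2 by ring]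
    ring
  exact hfn ▸ h4

theorem integral_eulerPoly_even (m : ℕ) :
    ∫ x in (0:ℝ)..1, eulerPoly (2 * m) x =
      8 * (2 * m).factorial * (-1 : ℝ) ^ m / Real.pi ^ (2 * m + 2) *
        ∑' n : ℕ, (1 : ℝ) / (2 * n + 1) ^ (2 * m + 2) := by
  rw [(hasSum_odd m).tsum_eq, integral_eulerPoly,
    bernoulliFun_endpoints_eq_of_ne_one (by omega), bernoulliFun_eval_zero]
  rw [show 2 * (m+1) - 1 = 2 * m + 1 by omega, show 2 * (m+1) = 2 * m + 2 by ring,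
    show (-1 : ℝ) ^ (m + 1 + 1) = (-1) ^ m by rw [pow_succ, pow_succ]; ring]
  set B : ℝ := (bernoulli (2 * m + 2) : ℝ)
  set H : ℝ := bernoulliFun (2 * m + 2) (1/2)
  have hfac : ((2 * m + 2)! : ℝ) = (2 * m + 2) * ((2 * m + 1) * (2 * m)!) := by
    rw [show 2 * m + 2 = (2 * m + 1) + 1 by ring, Nat.factorial_succ, Nat.factorial_succ]
    push_cast; ring
  have hpi : (π : ℝ) ≠ 0 := Real.pi_ne_zero
  have hfac2 : ((2 * m)! : ℝ) ≠ 0 := by positivity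
  have h1 : (2 * (m:ℝ) + 1) ≠ 0 := by positivity
  have h2 : (2 * (m:ℝ) + 2) ≠ 0 := by positivity
  rw [hfac]
  push_cast
  field_simp
  ring_nf
  simp only [pow_mul', neg_one_sq, one_pow]
  ring_nf
end
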